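/- Suppose m and n are distinct odd integers with m, n ≥ 3, and that for all distinct x, y ∈ G the faces of the darts (x,y) and (y,x) are simple cycles, one of length m and the other of length n. Then there is no bijection σ : G → G with σ(0) = 0 which is an orientation-reversing automorphism, i.e., no such σ satisfies σ(x + ρ₀(y−x)) = σ(x) + ρ₀^{−1}(σ(y) − σ(x)) for every dart (x,y). -/

import Mathlib

/-- The face-tracing map: it sends the dart `(x, y)` to `(y, y + ρ₀(x − y))`. -/
def faceMap {G : Type*} [AddCommGroup G] (ρ₀ : G → G) : G × G → G × G :=
  fun p => (p.2, p.2 + ρ₀ (p.1 - p.2))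

/-- The face of the dart `p` (its orbit under the face-tracing map) is a simple cycle of
length `k`: it consists of exactly `k` darts whose first components are pairwise distinct. -/
def IsSimpleCycleFace {G : Type*} [AddCommGroup G] (ρ₀ : G → G) (k : ℕ) (p : G × G) : Prop :=
  (faceMap ρ₀)^[k] p = p ∧
    ∀ i < k, ∀ j < k, ((faceMap ρ₀)^[i] p).1 = ((faceMap ρ₀)^[j] p).1 → i = j

namespace NoORA

variable {G : Type*} [AddCommGroup G]

/-- The inverse of the face-tracing map. -/
def fmInv (ρ₀ : Equiv.Perm G) : G × G → G × G := fun q => (q.1 + ρ₀⁻¹ (q.2 - q.1), q.1)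

lemma fmInv_faceMap (ρ₀ : Equiv.Perm G) : Function.LeftInverse (fmInv ρ₀) (faceMap ⇑ρ₀) := by
  intro p; simp [fmInv, faceMap]

lemma faceMap_fmInv (ρ₀ : Equiv.Perm G) : Function.LeftInverse (faceMap ⇑ρ₀) (fmInv ρ₀) := by
  intro p; simp [fmInv, faceMap]

lemma dart_iter (ρ₀ : Equiv.Perm G) (hρ0 : ρ₀ 0 = 0) {p : G × G} (hp : p.1 ≠ p.2) (i : ℕ) :
    ((faceMap ⇑ρ₀)^[i] p).1 ≠ ((faceMap ⇑ρ₀)^[i] p).2 := by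
  induction i with
  | zero => exact hp
  | succ i ih =>
    rw [Function.iterate_succ_apply']
    set q := (faceMap ⇑ρ₀)^[i] p with hq
    intro h
    have h2 : ρ₀ (q.1 - q.2) = 0 := (left_eq_add.mp h)
    have h3 : q.1 - q.2 = 0 := ρ₀.injective (by rw [h2, hρ0])
    exact ih (sub_eq_zero.mp h3)

lemma psi_conj (ρ₀ : Equiv.Perm G) (σ : G → G)
    (H : ∀ x y : G, x ≠ y → σ (x + ρ₀ (y - x)) = σ x + ρ₀⁻¹ (σ y - σ x))
    {q : G × G} (hq : q.1 ≠ q.2) :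
    (σ ((faceMap ⇑ρ₀ q).2), σ ((faceMap ⇑ρ₀ q).1)) = fmInv ρ₀ (σ q.2, σ q.1) := by
  show (σ (q.2 + ρ₀ (q.1 - q.2)), σ q.2) = (σ q.2 + ρ₀⁻¹ (σ q.1 - σ q.2), σ q.2)
  rw [H q.2 q.1 (Ne.symm hq)]

lemma psi_iter (ρ₀ : Equiv.Perm G) (hρ0 : ρ₀ 0 = 0) (σ : G → G)
    (H : ∀ x y : G, x ≠ y → σ (x + ρ₀ (y - x)) = σ x + ρ₀⁻¹ (σ y - σ x))
    {p : G × G} (hp : p.1 ≠ p.2) (i : ℕ) :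
    (σ (((faceMap ⇑ρ₀)^[i] p).2), σ (((faceMap ⇑ρ₀)^[i] p).1))
      = (fmInv ρ₀)^[i] (σ p.2, σ p.1) := by
  induction i with
  | zero => rfl
  | succ i ih =>
    rw [Function.iterate_succ_apply', Function.iterate_succ_apply', ← ih]
    exact psi_conj ρ₀ σ H (dart_iter ρ₀ hρ0 hp i)

lemma peel (ρ₀ : Equiv.Perm G) {q : G × G} {k : ℕ} (hq : (faceMap ⇑ρ₀)^[k] q = q)
    {i : ℕ} (hik : i ≤ k) : (fmInv ρ₀)^[i] q = (faceMap ⇑ρ₀)^[k - i] q := by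
  have h2 : (faceMap ⇑ρ₀)^[i] ((faceMap ⇑ρ₀)^[k - i] q) = q := by
    rw [← Function.iterate_add_apply, (show i + (k - i) = k by omega), hq]
  calc (fmInv ρ₀)^[i] q = (fmInv ρ₀)^[i] ((faceMap ⇑ρ₀)^[i] ((faceMap ⇑ρ₀)^[k - i] q)) := by
        rw [h2]
    _ = (faceMap ⇑ρ₀)^[k - i] q := ((fmInv_faceMap ρ₀).iterate i) _

lemma main_ident (ρ₀ : Equiv.Perm G) (hρ0 : ρ₀ 0 = 0) (σ : G → G)
    (H : ∀ x y : G, x ≠ y → σ (x + ρ₀ (y - x)) = σ x + ρ₀⁻¹ (σ y - σ x))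
    {p : G × G} (hp : p.1 ≠ p.2) {k : ℕ} (hk : (faceMap ⇑ρ₀)^[k] p = p) :
    (faceMap ⇑ρ₀)^[k] (σ p.2, σ p.1) = (σ p.2, σ p.1) ∧
    ∀ i ≤ k, (faceMap ⇑ρ₀)^[i] (σ p.2, σ p.1) =
      (σ (((faceMap ⇑ρ₀)^[k - i]) p).2, σ (((faceMap ⇑ρ₀)^[k - i]) p).1) := by
  have key : (σ p.2, σ p.1) = (fmInv ρ₀)^[k] (σ p.2, σ p.1) := by
    have h1 := psi_iter ρ₀ hρ0 σ H hp k
    rw [hk] at h1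
    exact h1
  have hA : (faceMap ⇑ρ₀)^[k] (σ p.2, σ p.1) = (σ p.2, σ p.1) := by
    conv_lhs => rw [key]
    exact ((faceMap_fmInv ρ₀).iterate k) _
  refine ⟨hA, fun i hik => ?_⟩
  have h3 := psi_iter ρ₀ hρ0 σ H hp (k - i)
  rw [peel ρ₀ hA (by omega : k - i ≤ k), (show k - (k - i) = i by omega)] at h3
  exact h3.symm

lemma snd_eq_fst_succ (ρ₀ : Equiv.Perm G) (p : G × G) (i : ℕ) :
    (((faceMap ⇑ρ₀)^[i]) p).2 = (((faceMap ⇑ρ₀)^[i + 1]) p).1 := by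
  rw [Function.iterate_succ_apply']
  rfl

lemma period_fst (ρ₀ : Equiv.Perm G) {p : G × G} {k : ℕ} (hk : (faceMap ⇑ρ₀)^[k] p = p)
    (s : ℕ) : (((faceMap ⇑ρ₀)^[s + k]) p).1 = (((faceMap ⇑ρ₀)^[s]) p).1 := by
  rw [Function.iterate_add_apply, hk]

lemma transfer (ρ₀ : Equiv.Perm G) (hρ0 : ρ₀ 0 = 0) (σ : G → G) (hσinj : Function.Injective σ)
    (H : ∀ x y : G, x ≠ y → σ (x + ρ₀ (y - x)) = σ x + ρ₀⁻¹ (σ y - σ x))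
    (k : ℕ) (hk3 : 3 ≤ k) {p : G × G} (hp : p.1 ≠ p.2)
    (h : IsSimpleCycleFace ⇑ρ₀ k p) : IsSimpleCycleFace ⇑ρ₀ k (σ p.2, σ p.1) := by
  obtain ⟨hper, hinj⟩ := h
  obtain ⟨hA, hB⟩ := main_ident ρ₀ hρ0 σ H hp hper
  refine ⟨hA, fun i hi j hj heq => ?_⟩
  have hfst : ∀ i < k, (((faceMap ⇑ρ₀)^[i]) (σ p.2, σ p.1)).1
      = σ ((((faceMap ⇑ρ₀)^[k - i + 1]) p).1) := by
    intro i hik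
    rw [hB i (le_of_lt hik), ← snd_eq_fst_succ]
  rw [hfst i hi, hfst j hj] at heq
  have hXeq := hσinj heq
  have red : ∀ i < k, ∃ a, a < k ∧ (((faceMap ⇑ρ₀)^[k - i + 1]) p).1 = (((faceMap ⇑ρ₀)^[a]) p).1
      ∧ (k - i + 1 = a ∨ k - i + 1 = a + k) := by
    intro i hik
    by_cases h0 : i = 0
    · subst h0
      refine ⟨1, by omega, ?_, by omega⟩
      rw [(show k - 0 + 1 = 1 + k by omega), period_fst ρ₀ hper 1]
    · by_cases h1 : i = 1
      · subst h1
        refine ⟨0, by omega, ?_, by omega⟩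
        rw [(show k - 1 + 1 = 0 + k by omega), period_fst ρ₀ hper 0]
      · exact ⟨k - i + 1, by omega, rfl, by omega⟩
  obtain ⟨a, hak, hXa, hta⟩ := red i hi
  obtain ⟨b, hbk, hXb, htb⟩ := red j hj
  have hab : a = b := hinj a hak b hbk (by rw [← hXa, ← hXb, hXeq])
  omega

lemma fixed_face (ρ₀ : Equiv.Perm G) (hρ0 : ρ₀ 0 = 0) (σ : G → G)
    (H : ∀ x y : G, x ≠ y → σ (x + ρ₀ (y - x)) = σ x + ρ₀⁻¹ (σ y - σ x))
    (hnofix : ∀ z : G, z ≠ 0 → σ z ≠ z)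
    (t : ℕ) (ht : 1 ≤ t) {p : G × G} (hp : p.1 ≠ p.2)
    (hψ : (σ p.2, σ p.1) = p)
    (h : IsSimpleCycleFace ⇑ρ₀ (2 * t + 1) p) :
    ∃ u : G, u ≠ 0 ∧ ρ₀ (σ u) = u ∧
      ∃ i < 2 * t + 1, (((faceMap ⇑ρ₀)^[i]) ((0 : G), u)).1 = p.2 := by
  obtain ⟨hper, hinj⟩ := h
  obtain ⟨_, hB⟩ := main_ident ρ₀ hρ0 σ H hp hper
  rw [hψ] at hB
  set k := 2 * t + 1 with hkdef
  set X : ℕ → G := fun i => (((faceMap ⇑ρ₀)^[i]) p).1 with hX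
  have hD1 : ∀ i ≤ k, X i = σ (X (k - i + 1)) := by
    intro i hik
    have := congrArg Prod.fst (hB i hik)
    rw [snd_eq_fst_succ] at this
    exact this
  have pair_i : ∀ i, ((faceMap ⇑ρ₀)^[i]) p = (X i, X (i + 1)) := by
    intro i
    have h2 := snd_eq_fst_succ ρ₀ p i
    exact Prod.ext rfl h2
  have hfix1 : X (t + 1) = σ (X (t + 1)) := by
    have := hD1 (t + 1) (by omega)
    rwa [(show k - (t + 1) + 1 = t + 1 by omega)] at this
  have hzero : X (t + 1) = 0 := by
    by_contra hz
    exact hnofix _ hz hfix1.symm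
  set u : G := X (t + 2) with hu
  have hσu : σ u = X t := by
    have := hD1 t (by omega)
    rw [(show k - t + 1 = t + 2 by omega)] at this
    exact this.symm
  have hu0 : u ≠ 0 := by
    intro h0
    by_cases htt : t + 2 < k
    · have := hinj (t + 2) htt (t + 1) (by omega) (by
        show X (t + 2) = X (t + 1); rw [← hu, h0, hzero])
      omega
    · have hX30 : X (t + 2) = X 0 := by
        have hh := period_fst ρ₀ hper 0
        rw [(show (0 : ℕ) + k = t + 2 by omega)] at hh
        exact hh
      have := hinj 0 (by omega) (t + 1) (by omega) (by
        show X 0 = X (t + 1)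
        rw [← hX30, ← hu, h0, hzero])
      omega
  have hρu : ρ₀ (σ u) = u := by
    have e1 : ((faceMap ⇑ρ₀)^[t + 1]) p = faceMap ⇑ρ₀ (((faceMap ⇑ρ₀)^[t]) p) :=
      Function.iterate_succ_apply' _ _ _
    rw [pair_i (t + 1), pair_i t] at e1
    have e2 : faceMap ⇑ρ₀ (X t, X (t + 1)) = (X (t + 1), X (t + 1) + ρ₀ (X t - X (t + 1))) := rfl
    rw [e2] at e1
    have e3 : X (t + 2) = X (t + 1) + ρ₀ (X t - X (t + 1)) := congrArg Prod.snd e1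
    rw [hzero] at e3
    simp only [zero_add, sub_zero] at e3
    rw [hσu, ← e3]
  refine ⟨u, hu0, hρu, t + 1, by omega, ?_⟩
  have e4 : ((faceMap ⇑ρ₀)^[t + 1]) p = ((0 : G), u) := by
    rw [pair_i (t + 1), hzero]
  have e5 : ((faceMap ⇑ρ₀)^[t]) ((0 : G), u) = p := by
    rw [← e4, ← Function.iterate_add_apply, (show t + (t + 1) = k by omega), hper]
  calc (((faceMap ⇑ρ₀)^[t + 1]) ((0 : G), u)).1
      = (((faceMap ⇑ρ₀)^[1]) (((faceMap ⇑ρ₀)^[t]) ((0 : G), u))).1 := by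
        rw [← Function.iterate_add_apply, (show 1 + t = t + 1 by omega)]
    _ = p.2 := by rw [e5]; rfl

lemma scf_unique (ρ₀ : G → G) {k k' : ℕ} {p : G × G}
    (hk : 0 < k) (hkk' : k < k')
    (h : IsSimpleCycleFace ρ₀ k p) (h' : IsSimpleCycleFace ρ₀ k' p) : False := by
  have := h'.2 k hkk' 0 (by omega) (by rw [h.1]; rfl)
  omega

lemma group_part [Fintype G]
    (m n : ℕ) (hm : 3 ≤ m) (hn : 3 ≤ n)
    (hcard : Fintype.card G = 2 * m * n + 1)
    (ρ₀ : Equiv.Perm G) (hρ0 : ρ₀ 0 = 0)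
    (hcyc : ∀ a b : G, a ≠ 0 → b ≠ 0 → ∃ k : ℕ, (ρ₀ ^ k) a = b)
    (σ : G → G) (hσinj : Function.Injective σ) (hσsurj : Function.Surjective σ)
    (hσ0 : σ 0 = 0)
    (hH : ∀ x y : G, x ≠ y → σ (x + ρ₀ (y - x)) = σ x + ρ₀⁻¹ (σ y - σ x)) :
    (∀ z : G, σ (σ z) = z) ∧
    (∃ u₁ u₂ : G, ∀ u : G, u ≠ 0 → ρ₀ (σ u) = u → u = u₁ ∨ u = u₂) := by
  classical
  have hρinv0 : ρ₀⁻¹ 0 = 0 := by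
    apply ρ₀.injective
    rw [← Equiv.Perm.mul_apply, mul_inv_cancel, Equiv.Perm.one_apply, hρ0]
  have hS1 : ∀ y : G, σ (ρ₀ y) = ρ₀⁻¹ (σ y) := by
    intro y
    by_cases hy : y = 0
    · subst hy; rw [hρ0, hσ0, hρinv0]
    · have := hH 0 y (Ne.symm hy)
      simpa [hσ0] using this
  set σ' : Equiv.Perm G := Equiv.ofBijective σ ⟨hσinj, hσsurj⟩ with hσ'
  have hσ'app : ∀ z : G, σ' z = σ z := fun z => rfl
  have hsemi : SemiconjBy σ' ρ₀ ρ₀⁻¹ := by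
    apply Equiv.ext
    intro z
    simp only [Equiv.Perm.mul_apply, hσ'app]
    exact hS1 z
  have hzsemi : ∀ s : ℤ, ∀ z : G, σ ((ρ₀ ^ s) z) = ((ρ₀ ^ s)⁻¹) (σ z) := by
    intro s z
    have h2 := hsemi.zpow_right s
    have h3 : (σ' * ρ₀ ^ s) z = ((ρ₀⁻¹) ^ s * σ') z := by rw [h2]
    simpa [Equiv.Perm.mul_apply, hσ'app, inv_zpow] using h3
  have hcard1 : 1 < Fintype.card G := by
    have h9 : 9 ≤ m * n := Nat.mul_le_mul hm hn
    rw [hcard]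
    nlinarith
  obtain ⟨a, ha⟩ := Fintype.exists_ne_of_one_lt_card hcard1 0
  have hσa0 : σ a ≠ 0 := fun h => ha (hσinj (h.trans hσ0.symm))
  have hcycZ : ∀ b : G, b ≠ 0 → ∃ s : ℤ, (ρ₀ ^ s) a = b := by
    intro b hb
    obtain ⟨k, hk⟩ := hcyc a b ha hb
    exact ⟨(k : ℤ), by rw [zpow_natCast]; exact hk⟩
  obtain ⟨c, hc⟩ := hcycZ (σ a) hσa0
  have hcoord : ∀ s : ℤ, σ ((ρ₀ ^ s) a) = (ρ₀ ^ (c - s)) a := by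
    intro s
    rw [hzsemi s a, ← hc, ← zpow_neg, ← Equiv.Perm.mul_apply, ← zpow_add,
      (show -s + c = c - s by ring)]
  have hinvol : ∀ z : G, σ (σ z) = z := by
    intro z
    by_cases hz : z = 0
    · subst hz; rw [hσ0, hσ0]
    · obtain ⟨s, hs⟩ := hcycZ z hz
      rw [← hs, hcoord s, hcoord (c - s), sub_sub_cancel]
  refine ⟨hinvol, ?_⟩
  set D : ℕ := orderOf ρ₀ with hD
  have zfixN : ∀ j : ℕ, (ρ₀ ^ j) (0 : G) = 0 := by
    intro j
    induction j with
    | zero => rfl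
    | succ j ih => rw [pow_succ, Equiv.Perm.mul_apply, hρ0, ih]
  have zfix : ∀ s : ℤ, (ρ₀ ^ s) (0 : G) = 0 := by
    intro s
    obtain ⟨j, rfl | rfl⟩ := Int.eq_nat_or_neg s
    · rw [zpow_natCast]; exact zfixN j
    · rw [zpow_neg, zpow_natCast]
      apply (ρ₀ ^ j).injective
      rw [← Equiv.Perm.mul_apply, mul_inv_cancel, Equiv.Perm.one_apply, zfixN j]
  have ordDvd : ∀ s : ℤ, (ρ₀ ^ s) a = a → ((D : ℤ)) ∣ s := by
    intro s hs
    have hall : ρ₀ ^ s = 1 := by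
      apply Equiv.ext
      intro b
      by_cases hb : b = 0
      · subst hb; rw [zfix]; rfl
      · obtain ⟨e, he⟩ := hcycZ b hb
        rw [← he, ← Equiv.Perm.mul_apply, ← zpow_add, add_comm, zpow_add,
          Equiv.Perm.mul_apply, hs]
        rfl
    exact orderOf_dvd_iff_zpow_eq_one.mpr hall
  have hD1 : (ρ₀ ^ (D : ℤ)) = 1 := by
    rw [zpow_natCast]; exact pow_orderOf_eq_one ρ₀
  have hne_dvd : ∀ (s t : ℤ) (u v : G), (ρ₀ ^ s) a = u → (ρ₀ ^ t) a = v → u ≠ v →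
      ¬ ((D : ℤ) ∣ (s - t)) := by
    intro s t u v hsu htv huv ⟨e, he⟩
    apply huv
    rw [← hsu, ← htv, (show s = t + (D : ℤ) * e by omega), zpow_add, Equiv.Perm.mul_apply,
      zpow_mul, hD1, one_zpow]
    rfl
  have hsol : ∀ u : G, u ≠ 0 → ρ₀ (σ u) = u → ∃ s : ℤ, (ρ₀ ^ s) a = u ∧
      (D : ℤ) ∣ (c + 1 - 2 * s) := by
    intro u hu hru
    obtain ⟨s, hs⟩ := hcycZ u hu
    refine ⟨s, hs, ?_⟩
    have h1 : σ u = (ρ₀ ^ (c - s)) a := by rw [← hs, hcoord]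
    have h2 : ρ₀ ((ρ₀ ^ (c - s)) a) = (ρ₀ ^ (1 + (c - s))) a := by
      rw [← Equiv.Perm.mul_apply, ← zpow_one_add]
    have h3 : (ρ₀ ^ (1 + (c - s))) a = (ρ₀ ^ s) a := by
      rw [← h2, ← h1, hru, hs]
    have h4 : (ρ₀ ^ (1 + (c - s) - s)) a = a := by
      have h5 : (ρ₀ ^ (1 + (c - s) - s)) a = (ρ₀ ^ (-s)) ((ρ₀ ^ (1 + (c - s))) a) := by
        rw [← Equiv.Perm.mul_apply, ← zpow_add,
          (show -s + (1 + (c - s)) = 1 + (c - s) - s by ring)]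
      rw [h5, h3, ← Equiv.Perm.mul_apply, ← zpow_add, neg_add_cancel, zpow_zero]
      rfl
    have := ordDvd _ h4
    rwa [(show 1 + (c - s) - s = c + 1 - 2 * s by ring)] at this
  have key3 : ∀ u v w : G, (u ≠ 0 ∧ ρ₀ (σ u) = u) → (v ≠ 0 ∧ ρ₀ (σ v) = v) →
      (w ≠ 0 ∧ ρ₀ (σ w) = w) → u = v ∨ u = w ∨ v = w := by
    intro u v w hu hv hw
    by_contra hcon
    push_neg at hcon
    obtain ⟨huv, huw, hvw⟩ := hcon
    obtain ⟨su, hsu, hdu⟩ := hsol u hu.1 hu.2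
    obtain ⟨sv, hsv, hdv⟩ := hsol v hv.1 hv.2
    obtain ⟨sw, hsw, hdw⟩ := hsol w hw.1 hw.2
    have hd1 : (D : ℤ) ∣ 2 * (su - sv) := by
      obtain ⟨e1, he1⟩ := hdu
      obtain ⟨e2, he2⟩ := hdv
      exact ⟨e2 - e1, by linarith⟩
    have hd2 : (D : ℤ) ∣ 2 * (sv - sw) := by
      obtain ⟨e1, he1⟩ := hdv
      obtain ⟨e2, he2⟩ := hdw
      exact ⟨e2 - e1, by linarith⟩
    have hodd : ∀ x : ℤ, (D : ℤ) ∣ 2 * x → ¬ ((D : ℤ) ∣ x) → ∃ e, 2 * x = D * (2 * e + 1) := by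
      rintro x ⟨e0, he0⟩ hnd
      rcases Int.even_or_odd e0 with ⟨e, he⟩ | ⟨e, he⟩
      · exfalso
        apply hnd
        refine ⟨e, ?_⟩
        have h6 : (2 : ℤ) * x = 2 * ((D : ℤ) * e) := by rw [he0, he]; ring
        exact mul_left_cancel₀ two_ne_zero h6
      · exact ⟨e, by rw [he0, he]⟩
    obtain ⟨e1, h1⟩ := hodd (su - sv) hd1 (hne_dvd su sv u v hsu hsv huv)
    obtain ⟨e2, h2⟩ := hodd (sv - sw) hd2 (hne_dvd sv sw v w hsv hsw hvw)
    apply hne_dvd su sw u w hsu hsw huw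
    refine ⟨e1 + e2 + 1, ?_⟩
    have h3 : (2 : ℤ) * (su - sw) = 2 * ((D : ℤ) * (e1 + e2 + 1)) := by
      linear_combination h1 + h2
    exact mul_left_cancel₀ two_ne_zero h3
  by_cases hex : ∃ u : G, u ≠ 0 ∧ ρ₀ (σ u) = u
  · obtain ⟨u₁, hu₁⟩ := hex
    by_cases hex2 : ∃ u₂ : G, (u₂ ≠ 0 ∧ ρ₀ (σ u₂) = u₂) ∧ u₂ ≠ u₁
    · obtain ⟨u₂, hu₂, hne2⟩ := hex2
      refine ⟨u₁, u₂, fun u h1 h2 => ?_⟩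
      rcases key3 u u₁ u₂ ⟨h1, h2⟩ hu₁ hu₂ with h | h | h
      · exact Or.inl h
      · exact Or.inr h
      · exact absurd h.symm hne2
    · push_neg at hex2
      exact ⟨u₁, u₁, fun u h1 h2 => Or.inl (hex2 u ⟨h1, h2⟩)⟩
  · push_neg at hex
    exact ⟨0, 0, fun u h1 h2 => absurd h2 (hex u h1)⟩

end NoORA

/-- Suppose `m` and `n` are distinct odd integers with `m, n ≥ 3`, `G` is a
finite abelian group of order `2mn+1`, `ρ₀` is a permutation of `G` fixing `0` acting as a single
cycle of length `2mn` on `G \ {0}`, and for all distinct `x, y ∈ G` the faces of the darts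
`(x,y)` and `(y,x)` are simple cycles, one of length `m` and the other of length `n`.  Then there
is no bijection `σ : G → G` with `σ(0) = 0` which is an orientation-reversing automorphism. -/
theorem no_orientation_reversing_automorphism
    (m n : ℕ) (hm : 3 ≤ m) (hn : 3 ≤ n) (hmo : Odd m) (hno : Odd n) (hmn : m ≠ n)
    (G : Type*) [AddCommGroup G] [Fintype G] (hcard : Fintype.card G = 2 * m * n + 1)
    (ρ₀ : Equiv.Perm G) (hρ0 : ρ₀ 0 = 0)
    (hcyc : ∀ a b : G, a ≠ 0 → b ≠ 0 → ∃ k : ℕ, (ρ₀ ^ k) a = b)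
    (hfaces : ∀ x y : G, x ≠ y →
      (IsSimpleCycleFace ⇑ρ₀ m (x, y) ∧ IsSimpleCycleFace ⇑ρ₀ n (y, x)) ∨
      (IsSimpleCycleFace ⇑ρ₀ n (x, y) ∧ IsSimpleCycleFace ⇑ρ₀ m (y, x))) :
    ∀ σ : G → G, Function.Bijective σ → σ 0 = 0 →
      ¬ (∀ x y : G, x ≠ y → σ (x + ρ₀ (y - x)) = σ x + ρ₀⁻¹ (σ y - σ x)) := by
  classical
  rintro σ ⟨hσinj, hσsurj⟩ hσ0 hH
  obtain ⟨hinvol, u₁, u₂, hU12⟩ :=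
    NoORA.group_part m n hm hn hcard ρ₀ hρ0 hcyc σ hσinj hσsurj hσ0 hH
  by_cases hfix : ∃ z : G, z ≠ 0 ∧ σ z = z
  · -- Case 1: σ has a nonzero fixed point
    obtain ⟨z, hz0, hzfix⟩ := hfix
    have h0z : (0 : G) ≠ z := Ne.symm hz0
    have hstep : ∀ k, 3 ≤ k → IsSimpleCycleFace ⇑ρ₀ k ((0 : G), z) →
        IsSimpleCycleFace ⇑ρ₀ k ((z : G), 0) := by
      intro k hk3 hscf
      have h2 := NoORA.transfer ρ₀ hρ0 σ hσinj hH k hk3 (p := ((0 : G), z)) h0z hscf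
      simpa [hzfix, hσ0] using h2
    rcases hfaces 0 z h0z with ⟨h1, h2⟩ | ⟨h1, h2⟩
    · have h3 := hstep m hm h1
      rcases Nat.lt_or_ge m n with hlt | hge
      · exact NoORA.scf_unique ⇑ρ₀ (by omega) hlt h3 h2
      · exact NoORA.scf_unique ⇑ρ₀ (by omega) (by omega : n < m) h2 h3
    · have h3 := hstep n hn h1
      rcases Nat.lt_or_ge n m with hlt | hge
      · exact NoORA.scf_unique ⇑ρ₀ (by omega) hlt h3 h2
      · exact NoORA.scf_unique ⇑ρ₀ (by omega) (by omega : m < n) h2 h3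
  · -- Case 2: σ has no nonzero fixed point
    push_neg at hfix
    have hnofix : ∀ z : G, z ≠ 0 → σ z ≠ z := hfix
    set M := max m n with hM
    have hAy : ∀ y : G, y ≠ 0 → ∃ z : G × ℕ, (z.1 ≠ 0 ∧ ρ₀ (σ z.1) = z.1) ∧ z.2 < M ∧
        (((faceMap ⇑ρ₀)^[z.2]) ((0 : G), z.1)).1 = y := by
      intro y hy
      have hpne : ((σ y, y) : G × G).1 ≠ ((σ y, y) : G × G).2 := hnofix y hy
      have hψ : (σ ((σ y, y) : G × G).2, σ ((σ y, y) : G × G).1) = ((σ y, y) : G × G) := by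
        show (σ y, σ (σ y)) = (σ y, y)
        rw [hinvol y]
      rcases hfaces (σ y) y hpne with ⟨h1, _⟩ | ⟨h1, _⟩
      · obtain ⟨t, ht0⟩ := hmo
        have ht : m = 2 * t + 1 := by omega
        have ht1 : 1 ≤ t := by omega
        rw [ht] at h1
        obtain ⟨u, hu0, hρu, i, hi, hXi⟩ :=
          NoORA.fixed_face ρ₀ hρ0 σ hH hnofix t ht1 hpne hψ h1
        refine ⟨(u, i), ⟨hu0, hρu⟩, ?_, hXi⟩
        have : i < m := by omega
        exact lt_of_lt_of_le this (le_max_left m n)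
      · obtain ⟨t, ht0⟩ := hno
        have ht : n = 2 * t + 1 := by omega
        have ht1 : 1 ≤ t := by omega
        rw [ht] at h1
        obtain ⟨u, hu0, hρu, i, hi, hXi⟩ :=
          NoORA.fixed_face ρ₀ hρ0 σ hH hnofix t ht1 hpne hψ h1
        refine ⟨(u, i), ⟨hu0, hρu⟩, ?_, hXi⟩
        have : i < n := by omega
        exact lt_of_lt_of_le this (le_max_right m n)
    have hcount : (Finset.univ.erase (0 : G)).card ≤
        ((({u₁, u₂} : Finset G)) ×ˢ Finset.range M).card := by
      apply Finset.card_le_card_of_injOn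
        (fun y => if h : y ≠ 0 then (hAy y h).choose else ((0 : G), (0 : ℕ)))
      · intro y hy
        have hy0 : y ≠ 0 := (Finset.mem_erase.mp hy).1
        simp only [dif_pos hy0]
        obtain ⟨⟨h1, h2⟩, h3, _⟩ := (hAy y hy0).choose_spec
        rw [Finset.mem_coe, Finset.mem_product]
        refine ⟨?_, Finset.mem_range.mpr h3⟩
        rcases hU12 _ h1 h2 with h | h
        · rw [h]; exact Finset.mem_insert_self _ _
        · rw [h]; exact Finset.mem_insert_of_mem (Finset.mem_singleton_self _)
      · intro y hy y' hy' heq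
        have hy0 : y ≠ 0 := (Finset.mem_erase.mp (Finset.mem_coe.mp hy)).1
        have hy'0 : y' ≠ 0 := (Finset.mem_erase.mp (Finset.mem_coe.mp hy')).1
        simp only [dif_pos hy0, dif_pos hy'0] at heq
        have h4 := ((hAy y hy0).choose_spec).2.2
        have h4' := ((hAy y' hy'0).choose_spec).2.2
        rw [← h4, ← h4', heq]
    have hcard2 : (Finset.univ.erase (0 : G)).card = 2 * m * n := by
      rw [Finset.card_erase_of_mem (Finset.mem_univ _), Finset.card_univ, hcard]
      omega
    have hT : ((({u₁, u₂} : Finset G)) ×ˢ Finset.range M).card ≤ 2 * M := by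
      rw [Finset.card_product, Finset.card_range]
      have h5 : ({u₁, u₂} : Finset G).card ≤ 2 := by
        apply le_trans (Finset.card_insert_le _ _)
        simp
      exact Nat.mul_le_mul_right M h5
    have hfin : 2 * m * n ≤ 2 * M := by
      rw [← hcard2]
      exact le_trans hcount hT
    rcases max_choice m n with h | h
    · rw [hM, h] at hfin
      nlinarith
    · rw [hM, h] at hfin
      nlinarith
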